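/- Let Ω ⊂ ℝⁿ be a bounded open set, T > 0, 2 < m < 3, k > 0. Let u₀, v₀ : closure(Ω) → ℝ be continuous with u₀ ≥ 0, v₀ ≥ 0 and u₀ v₀ ≡ 0, and let δ > ‖v₀‖_{C(closure(Ω))} e^{−1}. Let u̲ : closure(Ω) × [0,T] → ℝ be continuous, C² in x and C¹ in t on Ω × (0,T] with t ↦ u̲(x,t) of class C¹ on [0,T] for each x ∈ Ω, and suppose: ∂ₜ u̲ = Δ u̲ in Ω × (0,T]; u̲(x,t) = 0 for x ∈ ∂Ω; 0 ≤ u̲(x,0) ≤ min{u₀(x),1} for x ∈ Ω; u̲ > 0 in Ω × (0,T]; and (m−1) ∂ₜ u̲(x,t) ≤ u̲(x,t)^{3−m} for all x ∈ Ω, t ∈ [0,T]. Let u : closure(Ω) × [0,T] → ℝ be continuous with 0 ≤ u ≤ ‖u₀‖_{C(closure(Ω))}, C² in x and C¹ in t on Ω × (0,T], and suppose u satisfies ∂ₜ u(x,t) = Δ u(x,t) − k v₀(x) u(x,t)^m exp(−k ∫₀ᵗ u(x,τ) dτ) in Ω × (0,T], u(x,t) = 0 for x ∈ ∂Ω and t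 ∈ (0,T], and u(·,0) = u₀. Then u(x,t) ≥ e^{−δt} u̲(x,t) for all (x,t) ∈ closure(Ω) × [0,T]. -/

import Mathlib

open Set Filter

/-- The Laplacian of `f : ℝⁿ → ℝ` at `x`: the sum of the second partial
derivatives in the coordinate directions. -/
noncomputable def laplacian {n : ℕ} (f : EuclideanSpace ℝ (Fin n) → ℝ)
    (x : EuclideanSpace ℝ (Fin n)) : ℝ :=
  ∑ i : Fin n, iteratedFDeriv ℝ 2 f x ![EuclideanSpace.single i 1, EuclideanSpace.single i 1]

/-- The supremum norm of `f` on the set `s`. -/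
noncomputable def supNorm {n : ℕ} (f : EuclideanSpace ℝ (Fin n) → ℝ)
    (s : Set (EuclideanSpace ℝ (Fin n))) : ℝ :=
  sSup ((fun x => |f x|) '' s)


section Aux

open Set Filter

lemma endpoint_deriv_nonpos {F : ℝ → ℝ} {D a b : ℝ} (hab : a < b)
    (hF : HasDerivWithinAt F D (Set.Icc a b) b)
    (hmin : ∀ t ∈ Set.Icc a b, F b ≤ F t) : D ≤ 0 := by
  have hmem : (a - b) ∈ posTangentConeAt (Set.Icc a b) b := by
    apply mem_posTangentConeAt_of_segment_subset
    rw [show b + (a - b) = a by ring, segment_symm, segment_eq_Icc hab.le]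
  have hlm : IsLocalMinOn F (Set.Icc a b) b :=
    Filter.eventually_iff_exists_mem.mpr ⟨Set.Icc a b, self_mem_nhdsWithin, fun t ht => hmin _ ht⟩
  have := hlm.hasFDerivWithinAt_nonneg hF.hasFDerivWithinAt hmem
  simp only [ContinuousLinearMap.toSpanSingleton_apply, ContinuousLinearMap.one_apply,
    smul_eq_mul] at this
  nlinarith

lemma second_deriv_test {φ ψ : ℝ → ℝ} {c : ℝ}
    (hφ : ∀ᶠ s in nhds (0:ℝ), HasDerivAt φ (ψ s) s)
    (hψ : HasDerivAt ψ c 0) (hmin : IsLocalMin φ 0) : 0 ≤ c := by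
  by_contra hc
  push_neg at hc
  have hψ0 : ψ 0 = 0 := by
    have := hmin.deriv_eq_zero
    rwa [hφ.self_of_nhds.deriv] at this
  have h1 : ∀ᶠ s in nhdsWithin (0:ℝ) (Set.Ioi 0), ψ s < 0 := by
    have hslope := hψ.hasDerivWithinAt (s := Set.Ioi (0:ℝ))
    rw [hasDerivWithinAt_iff_tendsto_slope] at hslope
    have hd : Set.Ioi (0:ℝ) \ {0} = Set.Ioi 0 := Set.diff_singleton_eq_self (by simp)
    rw [hd] at hslope
    have hlt : ∀ᶠ t in nhdsWithin (0:ℝ) (Set.Ioi 0), slope ψ 0 t < c/2 :=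
      hslope (Iio_mem_nhds (by linarith))
    filter_upwards [hlt, self_mem_nhdsWithin] with s hs hs'
    rw [Set.mem_Ioi] at hs'
    rw [slope_def_field, hψ0, sub_zero, sub_zero] at hs
    have hcs : ψ s / s < 0 := lt_trans hs (by linarith)
    exact (div_neg_iff.mp hcs).resolve_left (fun h => absurd hs' (not_lt.mpr h.2.le)) |>.1
  have hminev : ∀ᶠ s in nhds (0:ℝ), φ 0 ≤ φ s := hmin
  rw [eventually_nhdsWithin_iff] at h1
  obtain ⟨η₁, hη₁, H1⟩ := Metric.eventually_nhds_iff.mp ((h1.and hφ).and hminev)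
  set p := η₁ / 2 with hp
  have hppos : 0 < p := by positivity
  have hsub : Set.Icc (0:ℝ) p ⊆ Metric.ball 0 η₁ := by
    intro x hx
    rw [Metric.mem_ball, Real.dist_eq, sub_zero, abs_of_nonneg hx.1]
    calc x ≤ p := hx.2
    _ < η₁ := by linarith
  have hanti : StrictAntiOn φ (Set.Icc 0 p) := by
    apply strictAntiOn_of_deriv_neg (convex_Icc 0 p)
    · intro x hx
      exact ((H1 (hsub hx)).1.2.continuousAt).continuousWithinAt
    · intro x hx
      rw [interior_Icc] at hx
      have := H1 (hsub ⟨hx.1.le, hx.2.le⟩)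
      rw [this.1.2.deriv]
      exact this.1.1 hx.1
  have hball0 : dist p 0 < η₁ := hsub ⟨hppos.le, le_refl _⟩
  have h2 := (H1 hball0).2
  have hlt2 : φ p < φ 0 := hanti ⟨le_refl 0, hppos.le⟩ ⟨hppos.le, le_refl p⟩ hppos
  linarith

lemma line_second_deriv {n : ℕ} {f : EuclideanSpace ℝ (Fin n) → ℝ}
    {x v : EuclideanSpace ℝ (Fin n)} (hf : ContDiffAt ℝ 2 f x) :
    (∀ᶠ s in nhds (0:ℝ), HasDerivAt (fun s : ℝ => f (x + s • v)) (fderiv ℝ f (x + s • v) v) s) ∧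
    HasDerivAt (fun s : ℝ => fderiv ℝ f (x + s • v) v) (iteratedFDeriv ℝ 2 f x ![v, v]) (0:ℝ) := by
  have hline : ∀ s : ℝ, HasDerivAt (fun s : ℝ => x + s • v) v s := by
    intro s
    simpa using ((hasDerivAt_id s).smul_const v).const_add x
  constructor
  · have hev : ∀ᶠ y in nhds x, ContDiffAt ℝ 2 f y := hf.eventually (by simp)
    have hcont : Tendsto (fun s : ℝ => x + s • v) (nhds 0) (nhds x) := by
      have : Continuous (fun s : ℝ => x + s • v) :=
        continuous_const.add (continuous_id.smul continuous_const)
      simpa using this.tendsto 0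
    filter_upwards [hcont.eventually hev] with s hs
    have hdiff : DifferentiableAt ℝ f (x + s • v) := hs.differentiableAt (by norm_num)
    exact hdiff.hasFDerivAt.comp_hasDerivAt s (hline s)
  · have hg : DifferentiableAt ℝ (fderiv ℝ f) x := by
      have := hf.fderiv_right (m := 1) (by norm_num)
      exact this.differentiableAt (by norm_num)
    have hg' : HasFDerivAt (fderiv ℝ f) (fderiv ℝ (fderiv ℝ f) x) (x + (0:ℝ) • v) := by
      simpa using hg.hasFDerivAt
    have h0 : HasDerivAt (fun s : ℝ => fderiv ℝ f (x + s • v)) (fderiv ℝ (fderiv ℝ f) x v) (0:ℝ) :=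
      hg'.comp_hasDerivAt (0:ℝ) (hline 0)
    have happ := h0.clm_apply (hasDerivAt_const (0:ℝ) v)
    simp only [map_zero, add_zero] at happ
    have : iteratedFDeriv ℝ 2 f x ![v, v] = fderiv ℝ (fderiv ℝ f) x v v := by
      rw [iteratedFDeriv_two_apply]
      simp
    rw [this]
    simpa using happ

lemma laplacian_min_comp {n : ℕ} {Ω : Set (EuclideanSpace ℝ (Fin n))} (hΩ : IsOpen Ω)
    {f g : EuclideanSpace ℝ (Fin n) → ℝ} {c : ℝ} {x : EuclideanSpace ℝ (Fin n)} (hx : x ∈ Ω)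
    (hf : ContDiffOn ℝ 2 f Ω) (hg : ContDiffOn ℝ 2 g Ω)
    (hmin : ∀ y ∈ Ω, f x - c * g x ≤ f y - c * g y) :
    c * laplacian g x ≤ laplacian f x := by
  have hfa : ContDiffAt ℝ 2 f x := hf.contDiffAt (hΩ.mem_nhds hx)
  have hga : ContDiffAt ℝ 2 g x := hg.contDiffAt (hΩ.mem_nhds hx)
  have key : ∀ i : Fin n,
      0 ≤ iteratedFDeriv ℝ 2 f x ![EuclideanSpace.single i 1, EuclideanSpace.single i 1]
        - c * iteratedFDeriv ℝ 2 g x ![EuclideanSpace.single i 1, EuclideanSpace.single i 1] := by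
    intro i
    set v := EuclideanSpace.single i (1:ℝ) with hv
    obtain ⟨hf1, hf2⟩ := line_second_deriv (v := v) hfa
    obtain ⟨hg1, hg2⟩ := line_second_deriv (v := v) hga
    have hcont : Tendsto (fun s : ℝ => x + s • v) (nhds 0) (nhds x) := by
      have : Continuous (fun s : ℝ => x + s • v) :=
        continuous_const.add (continuous_id.smul continuous_const)
      simpa using this.tendsto 0
    have hmem : ∀ᶠ s in nhds (0:ℝ), x + s • v ∈ Ω := hcont.eventually (hΩ.mem_nhds hx)
    have hlm : IsLocalMin (fun s : ℝ => f (x + s • v) - c * g (x + s • v)) 0 := by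
      filter_upwards [hmem] with s hs
      simpa using hmin _ hs
    have hφ : ∀ᶠ s in nhds (0:ℝ), HasDerivAt (fun s : ℝ => f (x + s • v) - c * g (x + s • v))
        (fderiv ℝ f (x + s • v) v - c * fderiv ℝ g (x + s • v) v) s := by
      filter_upwards [hf1, hg1] with s h1 h2
      exact h1.sub (h2.const_mul c)
    have hψ : HasDerivAt (fun s : ℝ => fderiv ℝ f (x + s • v) v - c * fderiv ℝ g (x + s • v) v)
        (iteratedFDeriv ℝ 2 f x ![v, v] - c * iteratedFDeriv ℝ 2 g x ![v, v]) 0 :=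
      hf2.sub (hg2.const_mul c)
    exact second_deriv_test hφ hψ hlm
  have hsum := Finset.sum_nonneg (fun i (_ : i ∈ Finset.univ) => key i)
  rw [Finset.sum_sub_distrib, ← Finset.mul_sum] at hsum
  unfold laplacian
  linarith

end Aux

/-- Dirichlet version of Lemma 2.3, case `2 < m < 3`: a classical solution
`u` of `∂ₜ u = Δu − k v₀ u^m exp(−k ∫₀ᵗ u)` with homogeneous Dirichlet boundary values and
initial datum `u₀` lies above `e^{−δt} u̲`, where `u̲` is a positive heat subsolution with
`(m−1) ∂ₜ u̲ ≤ u̲^{3−m}` and `0 ≤ u̲(·,0) ≤ min{u₀, 1}`, provided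
`δ > ‖v₀‖_{C(closure Ω)} e^{−1}`. -/
theorem lower_bound_comparison (n : ℕ)
    (Ω : Set (EuclideanSpace ℝ (Fin n))) (hΩo : IsOpen Ω) (hΩb : Bornology.IsBounded Ω)
    (T : ℝ) (hT : 0 < T)
    (m : ℝ) (hm2 : 2 < m) (hm3 : m < 3)
    (k : ℝ) (hk : 0 < k)
    (u₀ v₀ : EuclideanSpace ℝ (Fin n) → ℝ)
    (hu₀c : ContinuousOn u₀ (closure Ω)) (hv₀c : ContinuousOn v₀ (closure Ω))
    (hu₀nonneg : ∀ x ∈ closure Ω, 0 ≤ u₀ x) (hv₀nonneg : ∀ x ∈ closure Ω, 0 ≤ v₀ x)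
    (hsep : ∀ x ∈ closure Ω, u₀ x * v₀ x = 0)
    (δ : ℝ) (hδ : supNorm v₀ (closure Ω) * Real.exp (-1) < δ)
    -- the heat subsolution u̲ (denoted `w`) and its time derivative `wt`
    (w wt : EuclideanSpace ℝ (Fin n) → ℝ → ℝ)
    (hwcont : ContinuousOn (fun p : EuclideanSpace ℝ (Fin n) × ℝ => w p.1 p.2)
      (closure Ω ×ˢ Set.Icc 0 T))
    (hwx : ∀ t ∈ Set.Ioc 0 T, ContDiffOn ℝ 2 (fun y => w y t) Ω)
    (hwt : ∀ x ∈ Ω, ∀ t ∈ Set.Icc (0 : ℝ) T, HasDerivWithinAt (w x) (wt x t) (Set.Icc 0 T) t)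
    (hwtc : ∀ x ∈ Ω, ContinuousOn (wt x) (Set.Icc 0 T))
    (hwheat : ∀ x ∈ Ω, ∀ t ∈ Set.Ioc 0 T, wt x t = laplacian (fun y => w y t) x)
    (hwbdry : ∀ x ∈ frontier Ω, ∀ t ∈ Set.Icc (0 : ℝ) T, w x t = 0)
    (hwinit : ∀ x ∈ Ω, 0 ≤ w x 0 ∧ w x 0 ≤ min (u₀ x) 1)
    (hwpos : ∀ x ∈ Ω, ∀ t ∈ Set.Ioc 0 T, 0 < w x t)
    (hwineq : ∀ x ∈ Ω, ∀ t ∈ Set.Icc (0 : ℝ) T, (m - 1) * wt x t ≤ w x t ^ (3 - m))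
    -- the solution u of the scalar integro-differential equation
    (u : EuclideanSpace ℝ (Fin n) → ℝ → ℝ)
    (hucont : ContinuousOn (fun p : EuclideanSpace ℝ (Fin n) × ℝ => u p.1 p.2)
      (closure Ω ×ˢ Set.Icc 0 T))
    (hubound : ∀ x ∈ closure Ω, ∀ t ∈ Set.Icc (0 : ℝ) T,
      0 ≤ u x t ∧ u x t ≤ supNorm u₀ (closure Ω))
    (hux : ∀ t ∈ Set.Ioc 0 T, ContDiffOn ℝ 2 (fun y => u y t) Ω)
    (hueq : ∀ x ∈ Ω, ∀ t ∈ Set.Ioc 0 T,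
      HasDerivWithinAt (u x)
        (laplacian (fun y => u y t) x
          - k * v₀ x * u x t ^ m * Real.exp (-(k * ∫ τ in (0 : ℝ)..t, u x τ)))
        (Set.Icc 0 T) t)
    (hubdry : ∀ x ∈ frontier Ω, ∀ t ∈ Set.Ioc 0 T, u x t = 0)
    (huinit : ∀ x ∈ closure Ω, u x 0 = u₀ x) :
    ∀ x ∈ closure Ω, ∀ t ∈ Set.Icc (0 : ℝ) T, Real.exp (-δ * t) * w x t ≤ u x t := by
  intro x hx t ht
  classical
  have hΩcl_comp : IsCompact (closure Ω) := hΩb.isCompact_closure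
  have hVbdd : BddAbove ((fun y => |v₀ y|) '' closure Ω) :=
    (hΩcl_comp.image_of_continuousOn hv₀c.abs).bddAbove
  have hVub : ∀ y ∈ closure Ω, v₀ y ≤ supNorm v₀ (closure Ω) := fun y hy =>
    le_trans (le_abs_self _) (le_csSup hVbdd ⟨y, hy, rfl⟩)
  have hV0 : 0 ≤ supNorm v₀ (closure Ω) :=
    le_trans (abs_nonneg _) (le_csSup hVbdd ⟨x, hx, rfl⟩)
  have hδ0 : 0 < δ := lt_of_le_of_lt (by positivity) hδ
  have hCpos : 0 < (1 + T) * T := by nlinarith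
  obtain ⟨ε₀, hε₀pos, hε₀⟩ : ∃ ε₀ : ℝ, 0 < ε₀ ∧
      supNorm v₀ (closure Ω) * Real.exp (-1) * Real.exp (k * ε₀ * ((1 + T) * T)) ≤ δ := by
    have hcont : Continuous
        (fun ε : ℝ => supNorm v₀ (closure Ω) * Real.exp (-1) * Real.exp (k * ε * ((1 + T) * T))) :=
      continuous_const.mul
        (Real.continuous_exp.comp ((continuous_const.mul continuous_id).mul continuous_const))
    have h0 : supNorm v₀ (closure Ω) * Real.exp (-1) * Real.exp (k * 0 * ((1 + T) * T)) < δ := by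
      simpa using hδ
    have hev := hcont.continuousAt.eventually_lt (continuousAt_const (y := δ)) h0
    obtain ⟨η, hη, H⟩ := Metric.eventually_nhds_iff.mp hev
    refine ⟨η / 2, by positivity, (H ?_).le⟩
    rw [Real.dist_eq, sub_zero, abs_of_pos (by positivity)]
    linarith
  have main : ∀ ε : ℝ, 0 < ε → ε ≤ ε₀ → ∀ y ∈ closure Ω, ∀ s ∈ Set.Icc (0:ℝ) T,
      0 < u y s - Real.exp (-δ * s) * w y s + ε * (1 + s) := by
    intro ε hεpos hεε₀
    by_contra hcon
    push_neg at hcon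
    obtain ⟨y₁, hy₁, s₁, hs₁, hZle₁⟩ := hcon
    have hZc : ContinuousOn
        (fun p : EuclideanSpace ℝ (Fin n) × ℝ =>
          u p.1 p.2 - Real.exp (-δ * p.2) * w p.1 p.2 + ε * (1 + p.2))
        (closure Ω ×ˢ Set.Icc 0 T) := by
      apply ContinuousOn.add
      · exact hucont.sub
          (((Real.continuous_exp.comp (continuous_const.mul continuous_snd)).continuousOn).mul
            hwcont)
      · exact (continuous_const.mul (continuous_const.add continuous_snd)).continuousOn
    have hKcomp : IsCompact (closure Ω ×ˢ Set.Icc (0:ℝ) T) := hΩcl_comp.prod isCompact_Icc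
    have hAclosed : IsClosed ((closure Ω ×ˢ Set.Icc (0:ℝ) T) ∩
        (fun p : EuclideanSpace ℝ (Fin n) × ℝ =>
          u p.1 p.2 - Real.exp (-δ * p.2) * w p.1 p.2 + ε * (1 + p.2)) ⁻¹' Set.Iic 0) :=
      hZc.preimage_isClosed_of_isClosed hKcomp.isClosed isClosed_Iic
    have hAcomp : IsCompact ((closure Ω ×ˢ Set.Icc (0:ℝ) T) ∩
        (fun p : EuclideanSpace ℝ (Fin n) × ℝ =>
          u p.1 p.2 - Real.exp (-δ * p.2) * w p.1 p.2 + ε * (1 + p.2)) ⁻¹' Set.Iic 0) :=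
      hKcomp.of_isClosed_subset hAclosed Set.inter_subset_left
    have hAne : ((closure Ω ×ˢ Set.Icc (0:ℝ) T) ∩
        (fun p : EuclideanSpace ℝ (Fin n) × ℝ =>
          u p.1 p.2 - Real.exp (-δ * p.2) * w p.1 p.2 + ε * (1 + p.2)) ⁻¹' Set.Iic 0).Nonempty :=
      ⟨(y₁, s₁), ⟨⟨hy₁, hs₁⟩, hZle₁⟩⟩
    obtain ⟨⟨x₀, t₀⟩, hp₀A, hp₀min⟩ := hAcomp.exists_isMinOn hAne continuous_snd.continuousOn
    rw [isMinOn_iff] at hp₀min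
    have hx₀cl : x₀ ∈ closure Ω := hp₀A.1.1
    have ht₀Icc : t₀ ∈ Set.Icc (0:ℝ) T := hp₀A.1.2
    have hZ0 : u x₀ t₀ - Real.exp (-δ * t₀) * w x₀ t₀ + ε * (1 + t₀) ≤ 0 := hp₀A.2
    have hmemcases : ∀ y, y ∈ closure Ω → y ∈ Ω ∨ y ∈ frontier Ω := by
      intro y hy
      by_cases h : y ∈ Ω
      · exact Or.inl h
      · exact Or.inr ⟨hy, by rwa [hΩo.interior_eq]⟩
    have htlow : ∀ y ∈ closure Ω, ∀ s ∈ Set.Icc (0:ℝ) T, s < t₀ →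
        0 < u y s - Real.exp (-δ * s) * w y s + ε * (1 + s) := by
      intro y hy s hsIcc hst
      by_contra h
      push_neg at h
      exact absurd (hp₀min (y, s) ⟨⟨hy, hsIcc⟩, h⟩) (not_le.mpr hst)
    have hwle0 : ∀ y ∈ closure Ω, w y 0 ≤ u₀ y := by
      intro y hy
      rcases hmemcases y hy with h | h
      · exact le_trans (hwinit y h).2 (min_le_left _ _)
      · rw [hwbdry y h 0 (Set.left_mem_Icc.mpr hT.le)]
        exact hu₀nonneg y hy
    have ht₀pos : 0 < t₀ := by
      rcases ht₀Icc.1.lt_or_eq with h | h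
      · exact h
      · exfalso
        rw [← h] at hZ0
        have h1 := huinit x₀ hx₀cl
        have h2 := hwle0 x₀ hx₀cl
        simp only [mul_zero, Real.exp_zero, one_mul, add_zero] at hZ0
        rw [h1] at hZ0
        linarith
    have ht₀T : t₀ ≤ T := ht₀Icc.2
    have ht₀Ioc : t₀ ∈ Set.Ioc (0:ℝ) T := ⟨ht₀pos, ht₀T⟩
    have hZline : ∀ y ∈ closure Ω, ContinuousOn
        (fun s => u y s - Real.exp (-δ * s) * w y s + ε * (1 + s)) (Set.Icc (0:ℝ) T) := by
      intro y hy
      exact hZc.comp ((continuous_const.prodMk continuous_id).continuousOn)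
        (fun s hs => Set.mk_mem_prod hy hs)
    have hZt₀nonneg : ∀ y ∈ closure Ω,
        0 ≤ u y t₀ - Real.exp (-δ * t₀) * w y t₀ + ε * (1 + t₀) := by
      intro y hy
      by_contra h
      push_neg at h
      have hcw : ContinuousWithinAt
          (fun s => u y s - Real.exp (-δ * s) * w y s + ε * (1 + s))
          (Set.Icc (0:ℝ) T) t₀ := (hZline y hy) t₀ ht₀Icc
      have hev : ∀ᶠ s in nhdsWithin t₀ (Set.Icc (0:ℝ) T),
          u y s - Real.exp (-δ * s) * w y s + ε * (1 + s) < 0 := hcw (Iio_mem_nhds h)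
      have hsub2 : Set.Ioo (0:ℝ) t₀ ⊆ Set.Icc (0:ℝ) T := fun r hr =>
        ⟨hr.1.le, hr.2.le.trans ht₀T⟩
      haveI := right_nhdsWithin_Ioo_neBot ht₀pos
      obtain ⟨s, hs1, hs2⟩ :=
        ((hev.filter_mono (nhdsWithin_mono t₀ hsub2)).and eventually_mem_nhdsWithin).exists
      exact absurd (htlow y hy s (hsub2 hs2) hs2.2) (not_lt.mpr hs1.le)
    have hZp₀ : u x₀ t₀ - Real.exp (-δ * t₀) * w x₀ t₀ + ε * (1 + t₀) = 0 :=
      le_antisymm hZ0 (hZt₀nonneg x₀ hx₀cl)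
    have hεt₀pos : 0 < ε * (1 + t₀) := by nlinarith
    have hx₀Ω : x₀ ∈ Ω := by
      rcases hmemcases x₀ hx₀cl with h | h
      · exact h
      · exfalso
        rw [hubdry x₀ h t₀ ht₀Ioc, hwbdry x₀ h t₀ ht₀Icc] at hZp₀
        simp only [mul_zero, zero_sub, neg_zero, zero_add] at hZp₀
        linarith
    have hβpos : 0 < Real.exp (-δ * t₀) := Real.exp_pos _
    have hβle1 : Real.exp (-δ * t₀) ≤ 1 := Real.exp_le_one_iff.mpr (by nlinarith)
    have hapos : 0 < w x₀ t₀ := hwpos x₀ hx₀Ω t₀ ht₀Ioc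
    have hUnn : 0 ≤ u x₀ t₀ := (hubound x₀ hx₀cl t₀ ht₀Icc).1
    have hUle : u x₀ t₀ ≤ Real.exp (-δ * t₀) * w x₀ t₀ := by linarith
    -- spatial minimum: comparison of laplacians
    have hlap : Real.exp (-δ * t₀) * laplacian (fun z => w z t₀) x₀ ≤
        laplacian (fun z => u z t₀) x₀ := by
      apply laplacian_min_comp hΩo hx₀Ω (hux t₀ ht₀Ioc) (hwx t₀ ht₀Ioc)
      intro y hyΩ
      have := hZt₀nonneg y (subset_closure hyΩ)
      show u x₀ t₀ - Real.exp (-δ * t₀) * w x₀ t₀ ≤ u y t₀ - Real.exp (-δ * t₀) * w y t₀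
      linarith
    -- time derivative at the touching point
    have hIccsub : Set.Icc (0:ℝ) t₀ ⊆ Set.Icc (0:ℝ) T := Set.Icc_subset_Icc_right ht₀T
    have hu' : HasDerivWithinAt (u x₀)
        (laplacian (fun y => u y t₀) x₀
          - k * v₀ x₀ * u x₀ t₀ ^ m * Real.exp (-(k * ∫ τ in (0:ℝ)..t₀, u x₀ τ)))
        (Set.Icc 0 t₀) t₀ := (hueq x₀ hx₀Ω t₀ ht₀Ioc).mono hIccsub
    have hw' : HasDerivWithinAt (w x₀) (wt x₀ t₀) (Set.Icc 0 t₀) t₀ :=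
      (hwt x₀ hx₀Ω t₀ ht₀Icc).mono hIccsub
    have hexp : HasDerivAt (fun s : ℝ => Real.exp (-δ * s)) (Real.exp (-δ * t₀) * (-δ * 1)) t₀ :=
      ((hasDerivAt_id t₀).const_mul (-δ)).exp
    have hlin : HasDerivWithinAt (fun s : ℝ => ε * (1 + s)) (ε * 1) (Set.Icc (0:ℝ) t₀) t₀ :=
      ((hasDerivWithinAt_id t₀ _).const_add 1).const_mul ε
    have hF : HasDerivWithinAt
        (fun s => u x₀ s - Real.exp (-δ * s) * w x₀ s + ε * (1 + s))
        (laplacian (fun y => u y t₀) x₀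
          - k * v₀ x₀ * u x₀ t₀ ^ m * Real.exp (-(k * ∫ τ in (0:ℝ)..t₀, u x₀ τ))
          + δ * (Real.exp (-δ * t₀) * w x₀ t₀)
          - Real.exp (-δ * t₀) * laplacian (fun y => w y t₀) x₀ + ε)
        (Set.Icc 0 t₀) t₀ := by
      have h := (hu'.sub (hexp.hasDerivWithinAt.mul hw')).add hlin
      rw [hwheat x₀ hx₀Ω t₀ ht₀Ioc] at h
      refine h.congr_deriv ?_
      ring
    have hmin_t : ∀ s ∈ Set.Icc (0:ℝ) t₀,
        u x₀ t₀ - Real.exp (-δ * t₀) * w x₀ t₀ + ε * (1 + t₀) ≤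
          u x₀ s - Real.exp (-δ * s) * w x₀ s + ε * (1 + s) := by
      intro s hs
      rcases hs.2.lt_or_eq with hlt | heq
      · have := htlow x₀ hx₀cl s (hIccsub hs) hlt
        linarith
      · rw [heq]
    have hD := endpoint_deriv_nonpos ht₀pos hF hmin_t
    have hRlow : δ * (Real.exp (-δ * t₀) * w x₀ t₀) + ε ≤
        k * v₀ x₀ * u x₀ t₀ ^ m * Real.exp (-(k * ∫ τ in (0:ℝ)..t₀, u x₀ τ)) := by
      linarith
    rcases (hv₀nonneg x₀ (subset_closure hx₀Ω)).lt_or_eq with hv₀pos | hv₀zero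
    swap
    · rw [← hv₀zero] at hRlow
      simp only [mul_zero, zero_mul] at hRlow
      nlinarith
    -- now v₀ x₀ > 0, hence u₀ x₀ = 0 and w x₀ 0 = 0
    have hu₀x₀ : u₀ x₀ = 0 := by
      rcases mul_eq_zero.mp (hsep x₀ (subset_closure hx₀Ω)) with h | h
      · exact h
      · exact absurd h (ne_of_gt hv₀pos)
    have hw0 : w x₀ 0 = 0 := by
      have h1 := (hwinit x₀ hx₀Ω).1
      have h2 := (hwinit x₀ hx₀Ω).2
      rw [hu₀x₀] at h2
      have : min (0:ℝ) 1 = 0 := min_eq_left zero_le_one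
      rw [this] at h2
      linarith
    have hgcont : ContinuousOn (fun s => w x₀ s) (Set.Icc (0:ℝ) T) :=
      hwcont.comp ((continuous_const.prodMk continuous_id).continuousOn)
        (fun s hs => Set.mk_mem_prod hx₀cl hs)
    have hucont₀ : ContinuousOn (fun s => u x₀ s) (Set.Icc (0:ℝ) T) :=
      hucont.comp ((continuous_const.prodMk continuous_id).continuousOn)
        (fun s hs => Set.mk_mem_prod hx₀cl hs)
    have hgnonneg : ∀ s ∈ Set.Icc (0:ℝ) T, 0 ≤ w x₀ s := by
      intro s hs
      rcases hs.1.lt_or_eq with h | h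
      · exact (hwpos x₀ hx₀Ω s ⟨h, hs.2⟩).le
      · rw [← h, hw0]
    have huIcc : Set.uIcc (0:ℝ) t₀ = Set.Icc 0 t₀ := Set.uIcc_of_le ht₀pos.le
    have hgcont' : ContinuousOn (fun s => w x₀ s) (Set.Icc (0:ℝ) t₀) := hgcont.mono hIccsub
    have hContuIcc : ∀ {f : ℝ → ℝ}, ContinuousOn f (Set.Icc (0:ℝ) t₀) →
        IntervalIntegrable f MeasureTheory.volume 0 t₀ := by
      intro f hf
      apply ContinuousOn.intervalIntegrable
      rwa [huIcc]
    have hwInt : IntervalIntegrable (fun s => w x₀ s) MeasureTheory.volume 0 t₀ :=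
      hContuIcc hgcont'
    -- monotonicity of the subsolution functional
    have hGd : ∀ τ ∈ Set.Ioo (0:ℝ) t₀, HasDerivAt
        (fun s => (∫ r in (0:ℝ)..s, w x₀ r) - w x₀ s ^ (m - 1))
        (w x₀ τ - wt x₀ τ * (m - 1) * w x₀ τ ^ (m - 1 - 1)) τ := by
      intro τ hτ
      have hτT : τ ∈ Set.Icc (0:ℝ) T := ⟨hτ.1.le, hτ.2.le.trans ht₀T⟩
      have hτnb : Set.Icc (0:ℝ) T ∈ nhds τ :=
        Icc_mem_nhds hτ.1 (lt_of_lt_of_le hτ.2 ht₀T)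
      have hIder : HasDerivAt (fun s => ∫ r in (0:ℝ)..s, w x₀ r) (w x₀ τ) τ := by
        apply intervalIntegral.integral_hasDerivAt_right
        · have hc : ContinuousOn (fun s => w x₀ s) (Set.uIcc (0:ℝ) τ) := by
            rw [Set.uIcc_of_le hτ.1.le]
            exact hgcont.mono (Set.Icc_subset_Icc_right hτT.2)
          exact hc.intervalIntegrable
        · exact ContinuousOn.stronglyMeasurableAtFilter isOpen_Ioo
            (hgcont.mono Set.Ioo_subset_Icc_self) τ ⟨hτ.1, lt_of_lt_of_le hτ.2 ht₀T⟩
        · exact hgcont.continuousAt hτnb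
      have hwder : HasDerivAt (fun s => w x₀ s) (wt x₀ τ) τ :=
        (hwt x₀ hx₀Ω τ hτT).hasDerivAt hτnb
      have hwne : w x₀ τ ≠ 0 := (hwpos x₀ hx₀Ω τ ⟨hτ.1, hτ.2.le.trans ht₀T⟩).ne'
      exact hIder.sub (hwder.rpow_const (p := m - 1) (Or.inl hwne))
    have hGc : ContinuousOn (fun s => (∫ r in (0:ℝ)..s, w x₀ r) - w x₀ s ^ (m - 1))
        (Set.Icc (0:ℝ) t₀) := by
      apply ContinuousOn.sub
      · have := intervalIntegral.continuousOn_primitive_interval' hwInt Set.left_mem_uIcc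
        rwa [huIcc] at this
      · exact hgcont'.rpow_const (fun s _ => Or.inr (by linarith))
    have hGmono : MonotoneOn (fun s => (∫ r in (0:ℝ)..s, w x₀ r) - w x₀ s ^ (m - 1))
        (Set.Icc (0:ℝ) t₀) := by
      apply monotoneOn_of_deriv_nonneg (convex_Icc 0 t₀) hGc
      · intro τ hτ
        rw [interior_Icc] at hτ
        exact (hGd τ hτ).differentiableAt.differentiableWithinAt
      · intro τ hτ
        rw [interior_Icc] at hτ
        rw [(hGd τ hτ).deriv]
        have hwτpos : 0 < w x₀ τ := hwpos x₀ hx₀Ω τ ⟨hτ.1, hτ.2.le.trans ht₀T⟩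
        have hineq := hwineq x₀ hx₀Ω τ ⟨hτ.1.le, hτ.2.le.trans ht₀T⟩
        have hmul := mul_le_mul_of_nonneg_left hineq (Real.rpow_nonneg hwτpos.le (m - 2))
        have hprod2 : w x₀ τ ^ (m - 2) * w x₀ τ ^ (3 - m) = w x₀ τ := by
          rw [← Real.rpow_add hwτpos]
          norm_num
        rw [hprod2] at hmul
        have hexp2 : m - 1 - 1 = m - 2 := by ring
        rw [hexp2]
        have hre : wt x₀ τ * (m - 1) * w x₀ τ ^ (m - 2) =
            w x₀ τ ^ (m - 2) * ((m - 1) * wt x₀ τ) := by ring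
        linarith [hre ▸ hmul]
    have hJ : w x₀ t₀ ^ (m - 1) ≤ ∫ r in (0:ℝ)..t₀, w x₀ r := by
      have hmono := hGmono (Set.left_mem_Icc.mpr ht₀pos.le)
        (Set.right_mem_Icc.mpr ht₀pos.le) ht₀pos.le
      have hG0 : (∫ r in (0:ℝ)..(0:ℝ), w x₀ r) - w x₀ 0 ^ (m - 1) = 0 := by
        rw [intervalIntegral.integral_same, hw0, Real.zero_rpow (by linarith : m - 1 ≠ 0)]
        ring
      have hmono' : (∫ r in (0:ℝ)..(0:ℝ), w x₀ r) - w x₀ 0 ^ (m - 1) ≤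
          (∫ r in (0:ℝ)..t₀, w x₀ r) - w x₀ t₀ ^ (m - 1) := hmono
      linarith
    -- integral comparisons
    have hptA : ∀ τ ∈ Set.Icc (0:ℝ) t₀,
        Real.exp (-δ * t₀) * w x₀ τ ≤ Real.exp (-δ * τ) * w x₀ τ := by
      intro τ hτ
      apply mul_le_mul_of_nonneg_right _ (hgnonneg τ (hIccsub hτ))
      exact Real.exp_le_exp.mpr (by nlinarith [hτ.2])
    have hptB : ∀ τ ∈ Set.Icc (0:ℝ) t₀,
        Real.exp (-δ * τ) * w x₀ τ - ε * (1 + τ) ≤ u x₀ τ := by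
      intro τ hτ
      rcases hτ.2.lt_or_eq with h | h
      · have := htlow x₀ hx₀cl τ (hIccsub hτ) h
        linarith
      · rw [h]
        linarith
    have hptC : ∀ τ ∈ Set.Icc (0:ℝ) t₀, ε * (1 + τ) ≤ ε * (1 + T) := by
      intro τ hτ
      have h := hτ.2.trans ht₀T
      exact mul_le_mul_of_nonneg_left (by linarith) hεpos.le
    have hexpwC : ContinuousOn (fun τ => Real.exp (-δ * τ) * w x₀ τ) (Set.Icc (0:ℝ) t₀) :=
      ((Real.continuous_exp.comp (continuous_const.mul continuous_id)).continuousOn).mul hgcont'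
    have hexpwInt := hContuIcc hexpwC
    have hlinInt : IntervalIntegrable (fun τ : ℝ => ε * (1 + τ)) MeasureTheory.volume 0 t₀ :=
      (continuous_const.mul (continuous_const.add continuous_id)).intervalIntegrable _ _
    have huInt := hContuIcc (hucont₀.mono hIccsub)
    have hstepA : Real.exp (-δ * t₀) * ∫ r in (0:ℝ)..t₀, w x₀ r ≤
        ∫ r in (0:ℝ)..t₀, Real.exp (-δ * r) * w x₀ r := by
      rw [← intervalIntegral.integral_const_mul]
      exact intervalIntegral.integral_mono_on ht₀pos.le
        (hContuIcc (continuousOn_const.mul hgcont')) hexpwInt hptA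
    have hstepB : (∫ r in (0:ℝ)..t₀, Real.exp (-δ * r) * w x₀ r)
        - (∫ r in (0:ℝ)..t₀, ε * (1 + r)) ≤ ∫ τ in (0:ℝ)..t₀, u x₀ τ := by
      rw [← intervalIntegral.integral_sub hexpwInt hlinInt]
      exact intervalIntegral.integral_mono_on ht₀pos.le (hexpwInt.sub hlinInt) huInt hptB
    have hstepC : (∫ r in (0:ℝ)..t₀, ε * (1 + r)) ≤ ε * ((1 + T) * T) := by
      have h1 : (∫ r in (0:ℝ)..t₀, ε * (1 + r)) ≤ ∫ _ in (0:ℝ)..t₀, ε * (1 + T) :=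
        intervalIntegral.integral_mono_on ht₀pos.le hlinInt intervalIntegrable_const hptC
      rw [intervalIntegral.integral_const, smul_eq_mul] at h1
      have h2 := mul_le_mul_of_nonneg_right ht₀T
        (mul_nonneg hεpos.le (by linarith : (0:ℝ) ≤ 1 + T))
      linarith
    have hIlow : Real.exp (-δ * t₀) * w x₀ t₀ ^ (m - 1) - ε * ((1 + T) * T) ≤
        ∫ τ in (0:ℝ)..t₀, u x₀ τ := by
      have hJmul := mul_le_mul_of_nonneg_left hJ hβpos.le
      linarith
    have hEbound : Real.exp (-(k * ∫ τ in (0:ℝ)..t₀, u x₀ τ)) ≤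
        Real.exp (-(k * (Real.exp (-δ * t₀) * w x₀ t₀ ^ (m - 1)))) *
          Real.exp (k * ε * ((1 + T) * T)) := by
      rw [← Real.exp_add]
      apply Real.exp_le_exp.mpr
      linarith [mul_le_mul_of_nonneg_left hIlow hk.le]
    have hUm : u x₀ t₀ ^ m ≤ (Real.exp (-δ * t₀) * w x₀ t₀) ^ m :=
      Real.rpow_le_rpow hUnn hUle (by linarith)
    have hRup : k * v₀ x₀ * u x₀ t₀ ^ m * Real.exp (-(k * ∫ τ in (0:ℝ)..t₀, u x₀ τ)) ≤
        k * supNorm v₀ (closure Ω) * (Real.exp (-δ * t₀) * w x₀ t₀) ^ m *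
          (Real.exp (-(k * (Real.exp (-δ * t₀) * w x₀ t₀ ^ (m - 1)))) *
            Real.exp (k * ε * ((1 + T) * T))) := by
      have e1 : 0 ≤ u x₀ t₀ ^ m := Real.rpow_nonneg hUnn m
      have e2 : 0 ≤ Real.exp (-(k * ∫ τ in (0:ℝ)..t₀, u x₀ τ)) := (Real.exp_pos _).le
      have e3 : 0 ≤ (Real.exp (-δ * t₀) * w x₀ t₀) ^ m :=
        Real.rpow_nonneg (mul_pos hβpos hapos).le m
      have e4 := hVub x₀ hx₀cl
      calc k * v₀ x₀ * u x₀ t₀ ^ m * Real.exp (-(k * ∫ τ in (0:ℝ)..t₀, u x₀ τ))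
          ≤ k * supNorm v₀ (closure Ω) * u x₀ t₀ ^ m *
            Real.exp (-(k * ∫ τ in (0:ℝ)..t₀, u x₀ τ)) :=
          mul_le_mul_of_nonneg_right
            (mul_le_mul_of_nonneg_right (mul_le_mul_of_nonneg_left e4 hk.le) e1) e2
        _ ≤ k * supNorm v₀ (closure Ω) * (Real.exp (-δ * t₀) * w x₀ t₀) ^ m *
            Real.exp (-(k * ∫ τ in (0:ℝ)..t₀, u x₀ τ)) :=
          mul_le_mul_of_nonneg_right
            (mul_le_mul_of_nonneg_left hUm (mul_nonneg hk.le hV0)) e2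
        _ ≤ k * supNorm v₀ (closure Ω) * (Real.exp (-δ * t₀) * w x₀ t₀) ^ m *
            (Real.exp (-(k * (Real.exp (-δ * t₀) * w x₀ t₀ ^ (m - 1)))) *
              Real.exp (k * ε * ((1 + T) * T))) :=
          mul_le_mul_of_nonneg_left hEbound
            (mul_nonneg (mul_nonneg hk.le hV0) e3)
    have hkey : k * (Real.exp (-δ * t₀) * w x₀ t₀) ^ m *
        Real.exp (-(k * (Real.exp (-δ * t₀) * w x₀ t₀ ^ (m - 1)))) ≤
        (Real.exp (-δ * t₀) * w x₀ t₀) * Real.exp (-1) := by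
      have hy0 : 0 < k * (Real.exp (-δ * t₀) * w x₀ t₀ ^ (m - 1)) :=
        mul_pos hk (mul_pos hβpos (Real.rpow_pos_of_pos hapos _))
      have hye : (k * (Real.exp (-δ * t₀) * w x₀ t₀ ^ (m - 1))) *
          Real.exp (-(k * (Real.exp (-δ * t₀) * w x₀ t₀ ^ (m - 1)))) ≤ Real.exp (-1) := by
        have h1 := Real.add_one_le_exp ((k * (Real.exp (-δ * t₀) * w x₀ t₀ ^ (m - 1))) - 1)
        have h2 := mul_le_mul_of_nonneg_right (by linarith :
            (k * (Real.exp (-δ * t₀) * w x₀ t₀ ^ (m - 1))) ≤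
              Real.exp ((k * (Real.exp (-δ * t₀) * w x₀ t₀ ^ (m - 1))) - 1))
          (Real.exp_pos (-(k * (Real.exp (-δ * t₀) * w x₀ t₀ ^ (m - 1))))).le
        rwa [← Real.exp_add, show (k * (Real.exp (-δ * t₀) * w x₀ t₀ ^ (m - 1))) - 1 +
          -(k * (Real.exp (-δ * t₀) * w x₀ t₀ ^ (m - 1))) = -1 by ring] at h2
      have hsplit : (Real.exp (-δ * t₀) * w x₀ t₀) ^ m =
          (Real.exp (-δ * t₀) * w x₀ t₀) *
            (Real.exp (-δ * t₀) ^ (m - 2) * (Real.exp (-δ * t₀) * w x₀ t₀ ^ (m - 1))) := by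
        have h1 : (Real.exp (-δ * t₀) * w x₀ t₀) ^ m =
            (Real.exp (-δ * t₀) * w x₀ t₀) ^ (1:ℝ) *
              (Real.exp (-δ * t₀) * w x₀ t₀) ^ (m - 1) := by
          rw [← Real.rpow_add (mul_pos hβpos hapos)]
          congr 1
          ring
        have h2 : (Real.exp (-δ * t₀) * w x₀ t₀) ^ (m - 1) =
            Real.exp (-δ * t₀) ^ (m - 1) * w x₀ t₀ ^ (m - 1) :=
          Real.mul_rpow (Real.exp_nonneg _) hapos.le
        have h3 : Real.exp (-δ * t₀) ^ (m - 1) =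
            Real.exp (-δ * t₀) ^ (m - 2) * Real.exp (-δ * t₀) ^ (1:ℝ) := by
          rw [← Real.rpow_add hβpos]
          congr 1
          ring
        rw [h1, h2, h3, Real.rpow_one, Real.rpow_one]
        ring
      have hβm2 : Real.exp (-δ * t₀) ^ (m - 2) ≤ 1 :=
        Real.rpow_le_one (Real.exp_nonneg _) hβle1 (by linarith)
      have hform : k * (Real.exp (-δ * t₀) * w x₀ t₀) ^ m *
          Real.exp (-(k * (Real.exp (-δ * t₀) * w x₀ t₀ ^ (m - 1)))) =
          (Real.exp (-δ * t₀) * w x₀ t₀) *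
            (Real.exp (-δ * t₀) ^ (m - 2) *
              ((k * (Real.exp (-δ * t₀) * w x₀ t₀ ^ (m - 1))) *
                Real.exp (-(k * (Real.exp (-δ * t₀) * w x₀ t₀ ^ (m - 1)))))) := by
        rw [hsplit]
        ring
      rw [hform]
      have h5 : Real.exp (-δ * t₀) ^ (m - 2) *
          ((k * (Real.exp (-δ * t₀) * w x₀ t₀ ^ (m - 1))) *
            Real.exp (-(k * (Real.exp (-δ * t₀) * w x₀ t₀ ^ (m - 1))))) ≤ 1 * Real.exp (-1) := by
        apply mul_le_mul hβm2 hye (mul_nonneg hy0.le (Real.exp_pos _).le)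
          zero_le_one
      have h6 := mul_le_mul_of_nonneg_left h5 (mul_pos hβpos hapos).le
      linarith
    have hexpε : Real.exp (k * ε * ((1 + T) * T)) ≤ Real.exp (k * ε₀ * ((1 + T) * T)) :=
      Real.exp_le_exp.mpr
        (mul_le_mul_of_nonneg_right (mul_le_mul_of_nonneg_left hεε₀ hk.le) hCpos.le)
    have hcontr : k * v₀ x₀ * u x₀ t₀ ^ m * Real.exp (-(k * ∫ τ in (0:ℝ)..t₀, u x₀ τ)) ≤
        δ * (Real.exp (-δ * t₀) * w x₀ t₀) := by
      have hc1 : k * supNorm v₀ (closure Ω) * (Real.exp (-δ * t₀) * w x₀ t₀) ^ m *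
          (Real.exp (-(k * (Real.exp (-δ * t₀) * w x₀ t₀ ^ (m - 1)))) *
            Real.exp (k * ε * ((1 + T) * T))) =
          (supNorm v₀ (closure Ω) * Real.exp (k * ε * ((1 + T) * T))) *
            (k * (Real.exp (-δ * t₀) * w x₀ t₀) ^ m *
              Real.exp (-(k * (Real.exp (-δ * t₀) * w x₀ t₀ ^ (m - 1))))) := by ring
      have hc2 := mul_le_mul_of_nonneg_left hkey
        (mul_nonneg hV0 (Real.exp_pos (k * ε * ((1 + T) * T))).le)
      have hc3 : (supNorm v₀ (closure Ω) * Real.exp (k * ε * ((1 + T) * T))) *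
          ((Real.exp (-δ * t₀) * w x₀ t₀) * Real.exp (-1)) ≤
          δ * (Real.exp (-δ * t₀) * w x₀ t₀) := by
        have h6 : supNorm v₀ (closure Ω) * Real.exp (-1) * Real.exp (k * ε * ((1 + T) * T)) ≤
            supNorm v₀ (closure Ω) * Real.exp (-1) * Real.exp (k * ε₀ * ((1 + T) * T)) :=
          mul_le_mul_of_nonneg_left hexpε (by positivity)
        have h8 : (0:ℝ) < Real.exp (-δ * t₀) * w x₀ t₀ := mul_pos hβpos hapos
        linarith [mul_le_mul_of_nonneg_right (h6.trans hε₀) h8.le]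
      calc k * v₀ x₀ * u x₀ t₀ ^ m * Real.exp (-(k * ∫ τ in (0:ℝ)..t₀, u x₀ τ))
          ≤ _ := hRup
        _ = _ := hc1
        _ ≤ (supNorm v₀ (closure Ω) * Real.exp (k * ε * ((1 + T) * T))) *
            ((Real.exp (-δ * t₀) * w x₀ t₀) * Real.exp (-1)) := hc2
        _ ≤ δ * (Real.exp (-δ * t₀) * w x₀ t₀) := hc3
    linarith
  -- pass to the limit ε → 0
  by_contra hcon
  push_neg at hcon
  have hd : 0 < Real.exp (-δ * t) * w x t - u x t := by linarith
  have hεdef : 0 < min ε₀ ((Real.exp (-δ * t) * w x t - u x t) / (2 * (1 + T))) :=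
    lt_min hε₀pos (by positivity)
  have hmain := main _ hεdef (min_le_left _ _) x hx t ht
  have h1 : min ε₀ ((Real.exp (-δ * t) * w x t - u x t) / (2 * (1 + T))) * (1 + t) ≤
      min ε₀ ((Real.exp (-δ * t) * w x t - u x t) / (2 * (1 + T))) * (1 + T) :=
    mul_le_mul_of_nonneg_left (by linarith [ht.2]) hεdef.le
  have h2 : min ε₀ ((Real.exp (-δ * t) * w x t - u x t) / (2 * (1 + T))) ≤
      (Real.exp (-δ * t) * w x t - u x t) / (2 * (1 + T)) := min_le_right _ _
  have h3 : min ε₀ ((Real.exp (-δ * t) * w x t - u x t) / (2 * (1 + T))) * (1 + T) ≤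
      (Real.exp (-δ * t) * w x t - u x t) / 2 := by
    rw [le_div_iff₀ (by linarith : (0:ℝ) < 2 * (1 + T))] at h2
    linarith
  linarith
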